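/- For every integer M there exist finite connected graphs G and H such that gp(G □ H) − (gp(G) + gp(H) − 2) ≥ M; in particular the difference in the known inequality gp(G □ H) ≥ gp(G) + gp(H) − 2 can be arbitrarily large. (Concretely, for n ≥ 3 one may take G = P_{i_1} □ ⋯ □ P_{i_{n-1}} with all i_j ≥ 2^(2^(n-1)) and H a path on at least 2^(2^(n-1)) vertices, so that gp(G □ H) = 2^(2^(n-1)), gp(G) = 2^(2^(n-2)), and gp(H) = 2.) -/

import Mathlib

/-- `S` is a general position set of the graph `G`: no three pairwise distinct
vertices of `S` lie on a common geodesic. -/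
def IsGPSetOf {V : Type} (G : SimpleGraph V) (S : Finset V) : Prop :=
  ∀ u ∈ S, ∀ v ∈ S, ∀ w ∈ S, u ≠ v → u ≠ w → v ≠ w →
    G.dist u w ≠ G.dist u v + G.dist v w

/-- The general position number of a graph `G`: the largest cardinality of a
general position set of `G`. -/
noncomputable def gpNum {V : Type} (G : SimpleGraph V) : ℕ :=
  sSup {k : ℕ | ∃ S : Finset V, S.card = k ∧ IsGPSetOf G S}

open SimpleGraph

set_option linter.unusedVariables false
set_option linter.unnecessarySimpa false

/-! ### Path graph on `Fin k` -/

def pd {k : ℕ} (a b : Fin k) : ℕ := (a.val - b.val) + (b.val - a.val)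

def pathG (k : ℕ) : SimpleGraph (Fin k) where
  Adj a b := a.val + 1 = b.val ∨ b.val + 1 = a.val
  symm := ⟨by intro a b h; tauto⟩
  loopless := ⟨by intro a h; omega⟩

lemma pathG_reach_zero {k : ℕ} (hk : 0 < k) :
    ∀ n (a : Fin k), a.val ≤ n → (pathG k).Reachable a ⟨0, hk⟩ := by
  intro n
  induction n with
  | zero =>
    intro a h
    have : a = ⟨0, hk⟩ := Fin.ext (by simp; omega)
    rw [this]
  | succ n ih =>
    intro a h
    by_cases h0 : a.val = 0
    · have : a = ⟨0, hk⟩ := Fin.ext h0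
      rw [this]
    · have hb : a.val - 1 < k := by omega
      have adj : (pathG k).Adj a ⟨a.val - 1, hb⟩ := by
        right; simp; omega
      exact adj.reachable.trans (ih ⟨a.val - 1, hb⟩ (by simp; omega))

lemma pathG_connected {k : ℕ} (hk : 0 < k) : (pathG k).Connected := by
  haveI : Nonempty (Fin k) := ⟨⟨0, hk⟩⟩
  refine ⟨fun a b => ?_⟩
  exact (pathG_reach_zero hk k a a.isLt.le).trans
    (pathG_reach_zero hk k b b.isLt.le).symm

lemma pathG_walk_le {k : ℕ} {a b : Fin k} (w : (pathG k).Walk a b) :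
    pd a b ≤ w.length := by
  induction w with
  | nil => simp [pd]
  | @cons u v t hadj w' ih =>
    simp only [Walk.length_cons]
    rcases hadj with h1 | h1 <;> (unfold pd at *; omega)

lemma pathG_dist_le {k : ℕ} (hk : 0 < k) :
    ∀ n (a b : Fin k), pd a b ≤ n → (pathG k).dist a b ≤ pd a b := by
  intro n
  induction n with
  | zero =>
    intro a b h
    have : a = b := Fin.ext (by unfold pd at h; omega)
    subst this
    simp [pd, SimpleGraph.dist_self]
  | succ n ih =>
    intro a b h
    rcases Nat.lt_trichotomy a.val b.val with hlt | heq | hgt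
    · have hb : a.val + 1 < k := by omega
      set c : Fin k := ⟨a.val + 1, hb⟩ with hc
      have adj : (pathG k).Adj a c := by left; show a.val + 1 = a.val + 1; rfl
      have h1 : (pathG k).dist a c ≤ 1 := by
        have := SimpleGraph.dist_le (Walk.cons adj Walk.nil)
        simpa using this
      have h2 : (pathG k).dist c b ≤ pd c b := ih c b (by unfold pd at *; simp [hc]; omega)
      calc (pathG k).dist a b ≤ (pathG k).dist a c + (pathG k).dist c b :=
            (pathG_connected hk).dist_triangle
        _ ≤ 1 + pd c b := by omega
        _ ≤ pd a b := by unfold pd; simp [hc]; omega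
    · have : a = b := Fin.ext heq
      subst this
      simp [pd, SimpleGraph.dist_self]
    · have hb : a.val - 1 < k := by omega
      set c : Fin k := ⟨a.val - 1, hb⟩ with hc
      have adj : (pathG k).Adj a c := by right; show a.val - 1 + 1 = a.val; omega
      have h1 : (pathG k).dist a c ≤ 1 := by
        have := SimpleGraph.dist_le (Walk.cons adj Walk.nil)
        simpa using this
      have h2 : (pathG k).dist c b ≤ pd c b := ih c b (by unfold pd at *; simp [hc]; omega)
      calc (pathG k).dist a b ≤ (pathG k).dist a c + (pathG k).dist c b :=
            (pathG_connected hk).dist_triangle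
        _ ≤ 1 + pd c b := by omega
        _ ≤ pd a b := by unfold pd; simp [hc]; omega

lemma pathG_dist {k : ℕ} (hk : 0 < k) (a b : Fin k) :
    (pathG k).dist a b = pd a b := by
  refine le_antisymm (pathG_dist_le hk (pd a b) a b le_rfl) ?_
  obtain ⟨w, hw⟩ := ((pathG_connected hk).preconnected a b).exists_walk_length_eq_dist
  rw [← hw]
  exact pathG_walk_le w

section BoxDist

variable {α β : Type} {G : SimpleGraph α} {H : SimpleGraph β}

lemma boxProd_walk_ge (hG : G.Connected) (hH : H.Connected) :
    ∀ {p q : α × β} (w : (G.boxProd H).Walk p q),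
      G.dist p.1 q.1 + H.dist p.2 q.2 ≤ w.length := by
  intro p q w
  induction w with
  | nil => simp
  | @cons u v t hadj w' ih =>
    simp only [Walk.length_cons]
    rcases (SimpleGraph.boxProd_adj.mp hadj) with ⟨h1, h2⟩ | ⟨h1, h2⟩
    · have t1 : G.dist u.1 t.1 ≤ G.dist u.1 v.1 + G.dist v.1 t.1 := hG.dist_triangle
      have t2 : G.dist u.1 v.1 ≤ 1 := by
        have := SimpleGraph.dist_le (Walk.cons h1 Walk.nil)
        simpa using this
      have h2' : H.dist u.2 t.2 = H.dist v.2 t.2 := by rw [h2]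
      omega
    · have t1 : H.dist u.2 t.2 ≤ H.dist u.2 v.2 + H.dist v.2 t.2 := hH.dist_triangle
      have t2 : H.dist u.2 v.2 ≤ 1 := by
        have := SimpleGraph.dist_le (Walk.cons h1 Walk.nil)
        simpa using this
      have h2' : G.dist u.1 t.1 = G.dist v.1 t.1 := by rw [h2]
      omega

lemma boxProd_dist (hG : G.Connected) (hH : H.Connected) (p q : α × β) :
    (G.boxProd H).dist p q = G.dist p.1 q.1 + H.dist p.2 q.2 := by
  obtain ⟨p1, p2⟩ := p
  obtain ⟨q1, q2⟩ := q
  dsimp only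
  refine le_antisymm ?_ ?_
  · obtain ⟨w1, hw1⟩ := (hG.preconnected p1 q1).exists_walk_length_eq_dist
    obtain ⟨w2, hw2⟩ := (hH.preconnected p2 q2).exists_walk_length_eq_dist
    have hl : ((w1.boxProdLeft H p2).append (w2.boxProdRight G q1)).length
        = w1.length + w2.length := by
      rw [Walk.length_append]
      exact congrArg₂ (· + ·) (Walk.length_map _ w1) (Walk.length_map _ w2)
    have := SimpleGraph.dist_le ((w1.boxProdLeft H p2).append (w2.boxProdRight G q1))
    omega
  · obtain ⟨w, hw⟩ := (((hG.boxProd hH)).preconnected (p1,p2) (q1,q2)).exists_walk_length_eq_dist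
    rw [← hw]
    exact boxProd_walk_ge hG hH w

end BoxDist

/-! ### The tower of grids -/

def Vt (k : ℕ) : ℕ → Type
  | 0 => Fin k
  | (M+1) => Vt k M × Fin k

noncomputable def Gg (k : ℕ) : (M : ℕ) → SimpleGraph (Vt k M)
  | 0 => pathG k
  | (M+1) => (Gg k M).boxProd (pathG k)

instance VtFintype (k M : ℕ) : Fintype (Vt k M) := by
  induction M with
  | zero => exact (inferInstance : Fintype (Fin k))
  | succ M ih => exact (@instFintypeProd _ _ ih inferInstance : Fintype (Vt k M × Fin k))

instance VtDecEq (k M : ℕ) : DecidableEq (Vt k M) := by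
  induction M with
  | zero => exact (inferInstance : DecidableEq (Fin k))
  | succ M ih => exact (@instDecidableEqProd _ _ ih inferInstance : DecidableEq (Vt k M × Fin k))

lemma Gg_connected (k : ℕ) (hk : 0 < k) : ∀ M, (Gg k M).Connected
  | 0 => pathG_connected hk
  | (M+1) => (Gg_connected k hk M).boxProd (pathG_connected hk)

def coords (k : ℕ) : ∀ M, Vt k M → Fin (M+1) → Fin k
  | 0, v => fun _ => v
  | (M+1), vs => Fin.snoc (coords k M vs.1) vs.2

lemma Gg_dist (k : ℕ) (hk : 0 < k) :
    ∀ M (x y : Vt k M),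
      (Gg k M).dist x y = ∑ i, pd (coords k M x i) (coords k M y i)
  | 0, x, y => by
    simp [coords, Gg, pathG_dist hk]
    exact pathG_dist hk x y
  | (M+1), x, y => by
    have h : (Gg k (M+1)).dist x y
        = (Gg k M).dist x.1 y.1 + (pathG k).dist x.2 y.2 :=
      boxProd_dist (Gg_connected k hk M) (pathG_connected hk) x y
    rw [h, Gg_dist k hk M, pathG_dist hk]
    conv_rhs => rw [show (coords k (M+1) x) = Fin.snoc (coords k M x.1) x.2 from rfl,
      show (coords k (M+1) y) = Fin.snoc (coords k M y.1) y.2 from rfl,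
      Fin.sum_univ_castSucc]
    simp [Fin.snoc_castSucc, Fin.snoc_last]

lemma coords_inj (k : ℕ) : ∀ M, Function.Injective (coords k M)
  | 0 => fun a b h => congrFun h 0
  | (M+1) => fun a b h => by
    have h1 : coords k M a.1 = coords k M b.1 := funext fun i => by
      have := congrFun h (Fin.castSucc i)
      simpa [coords, Fin.snoc_castSucc] using this
    have h2 : a.2 = b.2 := by
      have := congrFun h (Fin.last _)
      simpa [coords, Fin.snoc_last] using this
    exact Prod.ext (coords_inj k M h1) h2

def ptv (k : ℕ) : ∀ M, (Fin (M+1) → Fin k) → Vt k M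
  | 0, f => f 0
  | (M+1), f => (ptv k M (Fin.init f), f (Fin.last _))

lemma coords_ptv (k : ℕ) : ∀ M (f : Fin (M+1) → Fin k), coords k M (ptv k M f) = f
  | 0, f => funext fun i => by
    have : i = 0 := Fin.ext (by omega)
    rw [this]; rfl
  | (M+1), f => by
    show Fin.snoc (coords k M (ptv k M (Fin.init f))) (f (Fin.last _)) = f
    rw [coords_ptv k M]
    exact Fin.snoc_init_self f

/-! ### Binary values of bit vectors, lexicographic comparison -/

def bval {N : ℕ} (x : Fin N → Bool) : ℕ := ∑ p, if x p then 2^(p : ℕ) else 0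

lemma sum_two_pow_lt (P : ℕ) : ∑ j ∈ Finset.range P, 2^j < 2^P := by
  induction P with
  | zero => simp
  | succ P ih => rw [Finset.sum_range_succ, pow_succ]; omega

lemma bval_lt_two_pow {N : ℕ} (x : Fin N → Bool) : bval x < 2^N := by
  have h1 : bval x ≤ ∑ p : Fin N, 2^(p : ℕ) := by
    refine Finset.sum_le_sum fun p _ => ?_
    split <;> simp
  have h2 : ∑ p : Fin N, 2^(p : ℕ) = ∑ j ∈ Finset.range N, 2^j :=
    Fin.sum_univ_eq_sum_range _ _
  have := sum_two_pow_lt N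
  omega

lemma bval_lt_bval {N : ℕ} {x y : Fin N → Bool} {P : Fin N}
    (hxP : x P = false) (hyP : y P = true) (hag : ∀ q, P < q → x q = y q) :
    bval x < bval y := by
  classical
  have hsplit : ∀ z : Fin N → Bool, bval z =
      (∑ q ∈ Finset.univ.filter (fun q => P < q), if z q then 2^(q:ℕ) else 0)
      + (∑ q ∈ Finset.univ.filter (fun q => ¬ P < q), if z q then 2^(q:ℕ) else 0) :=
    fun z => (Finset.sum_filter_add_sum_filter_not _ _ _).symm
  rw [hsplit x, hsplit y]
  have hhi : (∑ q ∈ Finset.univ.filter (fun q => P < q), if x q then 2^(q:ℕ) else 0)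
      = ∑ q ∈ Finset.univ.filter (fun q => P < q), if y q then 2^(q:ℕ) else 0 :=
    Finset.sum_congr rfl (fun q hq => by rw [hag q (Finset.mem_filter.mp hq).2])
  rw [hhi]
  have hylow : 2^(P:ℕ) ≤
      ∑ q ∈ Finset.univ.filter (fun q => ¬ P < q), if y q then 2^(q:ℕ) else 0 := by
    have hPmem : P ∈ Finset.univ.filter (fun q => ¬ P < q) := by simp
    have := Finset.single_le_sum (f := fun q : Fin N => if y q then 2^(q:ℕ) else 0)
      (fun _ _ => Nat.zero_le _) hPmem
    simpa [hyP] using this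
  have hxlow : (∑ q ∈ Finset.univ.filter (fun q => ¬ P < q), if x q then 2^(q:ℕ) else 0)
      < 2^(P:ℕ) := by
    have hle : (∑ q ∈ Finset.univ.filter (fun q => ¬ P < q), if x q then 2^(q:ℕ) else 0)
        ≤ ∑ q : Fin N, if (q:ℕ) < (P:ℕ) then 2^(q:ℕ) else 0 := by
      refine le_trans (Finset.sum_le_sum ?_) (Finset.sum_le_sum_of_subset ?_)
      · intro q hq
        simp only [Finset.mem_filter, Finset.mem_univ, true_and, not_lt] at hq
        by_cases hqP : q = P
        · subst hqP; simp [hxP]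
        · have : (q:ℕ) < (P:ℕ) := lt_of_le_of_ne (by exact_mod_cast hq) (by
            intro hc; exact hqP (Fin.ext hc))
          simp only [this, if_true]
          split <;> simp
      · exact Finset.filter_subset _ _ |>.trans (Finset.subset_univ _)
    have heq : (∑ q : Fin N, if (q:ℕ) < (P:ℕ) then 2^(q:ℕ) else 0)
        = ∑ j ∈ Finset.range N, if j < (P:ℕ) then 2^j else 0 :=
      Fin.sum_univ_eq_sum_range (fun j => if j < (P:ℕ) then 2^j else 0) N
    have heq2 : (∑ j ∈ Finset.range N, if j < (P:ℕ) then 2^j else 0)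
        = ∑ j ∈ (Finset.range N).filter (fun j => j < (P:ℕ)), 2^j := by
      rw [Finset.sum_filter]
    have heq3 : (Finset.range N).filter (fun j => j < (P:ℕ)) = Finset.range (P:ℕ) := by
      ext j
      simp only [Finset.mem_filter, Finset.mem_range]
      have := P.isLt
      omega
    have heq4 : (∑ j ∈ (Finset.range N).filter (fun j => j < (P:ℕ)), 2^j)
        = ∑ j ∈ Finset.range (P:ℕ), 2^j := by rw [heq3]
    have := sum_two_pow_lt (P:ℕ)
    omega
  omega

/-- The largest position where `x` and `y` differ. -/
noncomputable def diffTop {N : ℕ} (x y : Fin N → Bool) (h : x ≠ y) : Fin N :=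
  (Finset.univ.filter (fun p => x p ≠ y p)).max' (by
    obtain ⟨p, hp⟩ : ∃ p, x p ≠ y p := by
      by_contra hc; push_neg at hc; exact h (funext hc)
    exact ⟨p, by simp [hp]⟩)

lemma diffTop_ne {N : ℕ} (x y : Fin N → Bool) (h : x ≠ y) :
    x (diffTop x y h) ≠ y (diffTop x y h) := by
  have := (Finset.univ.filter (fun p => x p ≠ y p)).max'_mem (by
    obtain ⟨p, hp⟩ : ∃ p, x p ≠ y p := by
      by_contra hc; push_neg at hc; exact h (funext hc)
    exact ⟨p, by simp [hp]⟩)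
  simpa [diffTop] using (Finset.mem_filter.mp this).2

lemma diffTop_agree {N : ℕ} (x y : Fin N → Bool) (h : x ≠ y) {q : Fin N}
    (hq : diffTop x y h < q) : x q = y q := by
  by_contra hc
  have hmem : q ∈ Finset.univ.filter (fun p => x p ≠ y p) := by simp [hc]
  have := Finset.le_max' _ q hmem
  exact absurd (lt_of_lt_of_le hq this) (lt_irrefl _)

lemma bval_lt_iff {N : ℕ} (x y : Fin N → Bool) (h : x ≠ y) :
    bval x < bval y ↔ x (diffTop x y h) = false := by
  have hne := diffTop_ne x y h
  have hag := fun q hq => diffTop_agree x y h (q := q) hq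
  constructor
  · intro hlt
    by_contra hx
    have hxT : x (diffTop x y h) = true := by
      cases hx' : x (diffTop x y h) <;> simp_all
    have hyF : y (diffTop x y h) = false := by
      cases hy' : y (diffTop x y h) <;> simp_all
    have : bval y < bval x :=
      bval_lt_bval hyF hxT (fun q hq => (hag q hq).symm)
    omega
  · intro hx
    have hyT : y (diffTop x y h) = true := by
      cases hy' : y (diffTop x y h) <;> simp_all
    exact bval_lt_bval hx hyT hag

lemma bval_injective {N : ℕ} : Function.Injective (bval (N := N)) := by
  intro x y hxy
  by_contra hne
  cases hx : x (diffTop x y hne)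
  · have := (bval_lt_iff x y hne).mpr hx
    omega
  · have hyF : y (diffTop x y hne) = false := by
      have := diffTop_ne x y hne
      cases hy : y (diffTop x y hne) <;> simp_all
    have := (bval_lt_iff y x (Ne.symm hne)).mpr (by
      have : diffTop y x (Ne.symm hne) = diffTop x y hne := by
        unfold diffTop
        congr 1
        ext p
        simp [ne_comm]
      rw [this]; exact hyF)
    omega

/-! ### Mirsky-type bound: comparability by few 2-chain-free partial orders -/

lemma chainBound {α : Type} :
    ∀ (L : List (α → α → Prop)) (S : Finset α),
    (∀ R ∈ L, ∀ x y : α, R x y → R y x → x = y) →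
    (∀ R ∈ L, ∀ x ∈ S, ∀ y ∈ S, ∀ z ∈ S,
        x ≠ y → y ≠ z → x ≠ z → R x y → R y z → False) →
    (∀ x ∈ S, ∀ y ∈ S, x ≠ y → ∃ R ∈ L, R x y ∨ R y x) →
    S.card ≤ 2 ^ L.length := by
  intro L
  induction L with
  | nil =>
    intro S _ _ hcomp
    simp only [List.length_nil, pow_zero]
    refine Finset.card_le_one.mpr fun a ha b hb => ?_
    by_contra hne
    obtain ⟨R, hR, _⟩ := hcomp a ha b hb hne
    simp at hR
  | cons R L ih =>
    intro S hanti hchain hcomp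
    classical
    set S1 := S.filter (fun x => ∃ y ∈ S, y ≠ x ∧ R y x) with hS1def
    set S2 := S \ S1 with hS2def
    have hsub1 : S1 ⊆ S := Finset.filter_subset _ _
    have hsub2 : S2 ⊆ S := Finset.sdiff_subset
    have hRhead : R ∈ R :: L := List.mem_cons_self
    have hnoR1 : ∀ x ∈ S1, ∀ y ∈ S1, x ≠ y → ¬ R x y := by
      intro x hx y hy hne hRxy
      obtain ⟨z, hzS, hzx, hRzx⟩ := (Finset.mem_filter.mp hx).2
      by_cases hzy : z = y
      · rw [hzy] at hRzx
        exact hne (hanti R hRhead x y hRxy hRzx)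
      · exact hchain R hRhead z hzS x (hsub1 hx) y (hsub1 hy)
          hzx hne hzy hRzx hRxy
    have hnoR2 : ∀ x ∈ S2, ∀ y ∈ S2, x ≠ y → ¬ R x y := by
      intro x hx y hy hne hRxy
      have hyS1 : y ∈ S1 := Finset.mem_filter.mpr
        ⟨hsub2 hy, x, hsub2 hx, hne, hRxy⟩
      exact (Finset.mem_sdiff.mp hy).2 hyS1
    have hcomp' : ∀ (T : Finset α), T ⊆ S →
        (∀ x ∈ T, ∀ y ∈ T, x ≠ y → ¬ R x y) →
        (∀ x ∈ T, ∀ y ∈ T, x ≠ y → ∃ R' ∈ L, R' x y ∨ R' y x) := by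
      intro T hTS hno x hx y hy hne
      obtain ⟨R', hR', hor⟩ := hcomp x (hTS hx) y (hTS hy) hne
      rcases List.mem_cons.mp hR' with rfl | hmem
      · exfalso
        rcases hor with h | h
        · exact hno x hx y hy hne h
        · exact hno y hy x hx (Ne.symm hne) h
      · exact ⟨R', hmem, hor⟩
    have hanti' : ∀ R' ∈ L, ∀ x y : α, R' x y → R' y x → x = y :=
      fun R' hR' => hanti R' (List.mem_cons_of_mem _ hR')
    have hchain' : ∀ (T : Finset α), T ⊆ S →
        (∀ R' ∈ L, ∀ x ∈ T, ∀ y ∈ T, ∀ z ∈ T,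
          x ≠ y → y ≠ z → x ≠ z → R' x y → R' y z → False) := by
      intro T hTS R' hR' x hx y hy z hz
      exact hchain R' (List.mem_cons_of_mem _ hR') x (hTS hx) y (hTS hy) z (hTS hz)
    have b1 : S1.card ≤ 2 ^ L.length :=
      ih S1 hanti' (hchain' S1 hsub1) (hcomp' S1 hsub1 hnoR1)
    have b2 : S2.card ≤ 2 ^ L.length :=
      ih S2 hanti' (hchain' S2 hsub2) (hcomp' S2 hsub2 hnoR2)
    have hcards : S2.card + S1.card = S.card :=
      Finset.card_sdiff_add_card_eq_card hsub1
    simp only [List.length_cons, pow_succ]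
    omega

/-! ### The doubly exponential general position construction -/

abbrev XX (m : ℕ) := Fin (2^(m+1)) → Bool

def sigmaP (m : ℕ) (p : Fin (2^(m+1))) : Fin (m+2) → Bool :=
  Fin.cons true (fun j : Fin (m+1) => (p : ℕ).testBit j)

def keyF (m : ℕ) (i : Fin (m+2)) (h : XX m) : Fin (2^(m+1)) → Bool :=
  fun p => if sigmaP m p i then h p else ! h p

noncomputable def valF (m : ℕ) (i : Fin (m+2)) (h : XX m) : ℕ := bval (keyF m i h)

lemma keyF_inj (m : ℕ) (i : Fin (m+2)) : Function.Injective (keyF m i) := by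
  intro x y hxy
  funext p
  have := congrFun hxy p
  unfold keyF at this
  split at this
  · exact this
  · cases hx : x p <;> cases hy : y p <;> simp_all

lemma keyF_ne_iff (m : ℕ) (i : Fin (m+2)) (x y : XX m) (p : Fin (2^(m+1))) :
    keyF m i x p ≠ keyF m i y p ↔ x p ≠ y p := by
  unfold keyF
  split
  · exact Iff.rfl
  · cases hx : x p <;> cases hy : y p <;> simp

lemma diffTop_keyF (m : ℕ) (i : Fin (m+2)) (x y : XX m) (hxy : x ≠ y)
    (hk : keyF m i x ≠ keyF m i y) :
    diffTop (keyF m i x) (keyF m i y) hk = diffTop x y hxy := by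
  unfold diffTop
  congr 1
  ext p
  simp only [Finset.mem_filter, Finset.mem_univ, true_and]
  exact keyF_ne_iff m i x y p

lemma valF_ne (m : ℕ) (i : Fin (m+2)) {x y : XX m} (h : x ≠ y) :
    valF m i x ≠ valF m i y := by
  intro hc
  exact h (keyF_inj m i (bval_injective hc))

lemma valF_lt_iff (m : ℕ) (i : Fin (m+2)) {x y : XX m} (h : x ≠ y) :
    valF m i x < valF m i y ↔ x (diffTop x y h) ≠ sigmaP m (diffTop x y h) i := by
  have hk : keyF m i x ≠ keyF m i y := fun hc => h (keyF_inj m i hc)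
  unfold valF
  rw [bval_lt_iff _ _ hk, diffTop_keyF m i x y h hk]
  set P := diffTop x y h
  unfold keyF
  cases hσ : sigmaP m P i <;> cases hx : x P <;> simp [hσ, hx]

/-- Core lemma: no point of the construction lies in the "box" of two others. -/
lemma escape (m : ℕ) (f c g : XX m) (hfc : f ≠ c) (hcg : c ≠ g) (hfg : f ≠ g)
    (hbetw : ∀ i : Fin (m+2),
      (valF m i f ≤ valF m i c ∧ valF m i c ≤ valF m i g) ∨
      (valF m i g ≤ valF m i c ∧ valF m i c ≤ valF m i f)) : False := by
  set P := diffTop f c hfc with hP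
  set Q := diffTop c g hcg with hQ
  have key : ∀ i, (f P ≠ sigmaP m P i) ↔ (c Q ≠ sigmaP m Q i) := by
    intro i
    have h1 := valF_lt_iff m i hfc
    have h2 := valF_lt_iff m i hcg
    have hne1 := valF_ne m i hfc
    have hne2 := valF_ne m i hcg
    have hb := hbetw i
    constructor
    · intro hA
      have hfc' : valF m i f < valF m i c := h1.mpr hA
      have : valF m i c < valF m i g := by omega
      exact h2.mp this
    · intro hB
      have hcg' : valF m i c < valF m i g := h2.mpr hB
      have : valF m i f < valF m i c := by omega
      exact h1.mp this
  have h0 : f P = c Q := by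
    have := key 0
    simp only [sigmaP, Fin.cons_zero] at this
    cases hf : f P <;> cases hc : c Q <;> simp_all
  have hbits : ∀ j : Fin (m+1), (P : ℕ).testBit j = (Q : ℕ).testBit j := by
    intro j
    have := key j.succ
    simp only [sigmaP, Fin.cons_succ] at this
    rw [h0] at this
    cases hc : c Q <;> cases hp : (P:ℕ).testBit j <;> cases hq : (Q:ℕ).testBit j <;>
      simp_all
  have hPQ : P = Q := by
    refine Fin.ext (Nat.eq_of_testBit_eq fun i => ?_)
    by_cases hi : i < m+1
    · exact hbits ⟨i, hi⟩
    · have h1 : (P:ℕ) < 2^i :=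
        lt_of_lt_of_le P.isLt (Nat.pow_le_pow_right (by norm_num) (by omega))
      have h2 : (Q:ℕ) < 2^i :=
        lt_of_lt_of_le Q.isLt (Nat.pow_le_pow_right (by norm_num) (by omega))
      rw [Nat.testBit_lt_two_pow h1, Nat.testBit_lt_two_pow h2]
  have : f P ≠ c P := diffTop_ne f c hfc
  rw [h0, hPQ] at this
  exact this rfl

/-! ### gpNum generalities -/

lemma isGPSetOf_empty {V : Type} (G : SimpleGraph V) : IsGPSetOf G ∅ := by
  intro u hu
  simp at hu

lemma gpNum_le_of {V : Type} [Fintype V] (G : SimpleGraph V) (B : ℕ)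
    (h : ∀ S : Finset V, IsGPSetOf G S → S.card ≤ B) : gpNum G ≤ B := by
  refine csSup_le ⟨0, ∅, by simp, isGPSetOf_empty G⟩ ?_
  rintro k ⟨S, rfl, hS⟩
  exact h S hS

lemma le_gpNum_of {V : Type} [Fintype V] (G : SimpleGraph V) (S : Finset V)
    (hS : IsGPSetOf G S) : S.card ≤ gpNum G := by
  refine le_csSup ⟨Fintype.card V, ?_⟩ ⟨S, rfl, hS⟩
  rintro k ⟨T, rfl, hT⟩
  exact Finset.card_le_univ T

/-! ### Upper bound for grids -/

abbrev Rrel (k M : ℕ) (τ : Fin M → Bool) (x y : Vt k M) : Prop :=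
  ∀ i : Fin (M+1), if (Fin.cons true τ : Fin (M+1) → Bool) i = true
    then coords k M x i ≤ coords k M y i
    else coords k M y i ≤ coords k M x i

lemma gg_upper (k M : ℕ) (hk : 0 < k) (S : Finset (Vt k M))
    (hS : IsGPSetOf (Gg k M) S) : S.card ≤ 2^(2^M) := by
  classical
  have hlen : ((Finset.univ : Finset (Fin M → Bool)).toList.map (Rrel k M)).length
      = 2^M := by
    rw [List.length_map, Finset.length_toList]
    simp [Fintype.card_fun]
  have hmain := chainBound ((Finset.univ : Finset (Fin M → Bool)).toList.map (Rrel k M)) S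
    ?_ ?_ ?_
  · rwa [hlen] at hmain
  · rintro R hR x y hxy hyx
    obtain ⟨τ, hτ, rfl⟩ := List.mem_map.mp hR
    refine coords_inj k M (funext fun i => ?_)
    have h1 := hxy i
    have h2 := hyx i
    by_cases hb : (Fin.cons true τ : Fin (M+1) → Bool) i = true
    · rw [if_pos hb] at h1 h2; exact le_antisymm h1 h2
    · rw [if_neg hb] at h1 h2; exact le_antisymm h2 h1
  · rintro R hR x hx y hy z hz hxy hyz hxz hRxy hRyz
    obtain ⟨τ, hτ, rfl⟩ := List.mem_map.mp hR
    refine hS x hx y hy z hz hxy hxz hyz ?_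
    rw [Gg_dist k hk M, Gg_dist k hk M, Gg_dist k hk M, ← Finset.sum_add_distrib]
    refine Finset.sum_congr rfl fun i _ => ?_
    have h1 := hRxy i
    have h2 := hRyz i
    by_cases hb : (Fin.cons true τ : Fin (M+1) → Bool) i = true
    · rw [if_pos hb] at h1 h2
      have h1' := Fin.le_def.mp h1
      have h2' := Fin.le_def.mp h2
      unfold pd
      omega
    · rw [if_neg hb] at h1 h2
      have h1' := Fin.le_def.mp h1
      have h2' := Fin.le_def.mp h2
      unfold pd
      omega
  · rintro x hx y hy hne
    by_cases h0 : coords k M x 0 ≤ coords k M y 0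
    · refine ⟨Rrel k M (fun j => decide (coords k M x j.succ ≤ coords k M y j.succ)),
        List.mem_map.mpr ⟨_, by simp [Finset.mem_toList], rfl⟩, Or.inl ?_⟩
      intro i
      induction i using Fin.cases with
      | zero => rw [Fin.cons_zero]; simpa using h0
      | succ j =>
        rw [Fin.cons_succ]
        by_cases hle : coords k M x j.succ ≤ coords k M y j.succ
        · simpa [hle] using hle
        · simp only [hle]
          simpa using le_of_not_ge hle
    · refine ⟨Rrel k M (fun j => decide (coords k M y j.succ ≤ coords k M x j.succ)),
        List.mem_map.mpr ⟨_, by simp [Finset.mem_toList], rfl⟩, Or.inr ?_⟩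
      intro i
      induction i using Fin.cases with
      | zero => rw [Fin.cons_zero]; simpa using le_of_not_ge h0
      | succ j =>
        rw [Fin.cons_succ]
        by_cases hle : coords k M y j.succ ≤ coords k M x j.succ
        · simpa [hle] using hle
        · simp only [hle]
          simpa using le_of_not_ge hle

/-! ### Lower bound set -/

noncomputable def ptX (m : ℕ) (h : XX m) : Vt (2^(2^(m+1))) (m+1) :=
  ptv _ (m+1) (fun i => ⟨valF m i h, bval_lt_two_pow (keyF m i h)⟩)

lemma coords_ptX (m : ℕ) (h : XX m) (i : Fin (m+2)) :
    coords (2^(2^(m+1))) (m+1) (ptX m h) i = ⟨valF m i h, bval_lt_two_pow (keyF m i h)⟩ := by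
  unfold ptX
  rw [coords_ptv]

lemma ptX_inj (m : ℕ) : Function.Injective (ptX m) := by
  intro x y hxy
  by_contra hne
  refine valF_ne m 0 hne ?_
  have := congrFun (congrArg (coords (2^(2^(m+1))) (m+1)) hxy) 0
  rw [coords_ptX, coords_ptX] at this
  exact congrArg Fin.val this

lemma lower_gp (m : ℕ) :
    IsGPSetOf (Gg (2^(2^(m+1))) (m+1)) (Finset.image (ptX m) Finset.univ) := by
  classical
  intro u hu v hv w hw huv huw hvw heq
  obtain ⟨f, -, rfl⟩ := Finset.mem_image.mp hu
  obtain ⟨c, -, rfl⟩ := Finset.mem_image.mp hv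
  obtain ⟨g, -, rfl⟩ := Finset.mem_image.mp hw
  have hfc : f ≠ c := fun h => huv (by rw [h])
  have hcg : c ≠ g := fun h => hvw (by rw [h])
  have hfg : f ≠ g := fun h => huw (by rw [h])
  set k := 2^(2^(m+1)) with hkdef
  have hk : 0 < k := Nat.pow_pos (by norm_num)
  rw [Gg_dist k hk (m+1), Gg_dist k hk (m+1), Gg_dist k hk (m+1),
    ← Finset.sum_add_distrib] at heq
  have hterm : ∀ i ∈ (Finset.univ : Finset (Fin (m+2))),
      pd (coords k (m+1) (ptX m f) i) (coords k (m+1) (ptX m g) i)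
      = pd (coords k (m+1) (ptX m f) i) (coords k (m+1) (ptX m c) i)
        + pd (coords k (m+1) (ptX m c) i) (coords k (m+1) (ptX m g) i) := by
    refine (Finset.sum_eq_sum_iff_of_le fun i _ => ?_).mp heq
    unfold pd
    omega
  refine escape m f c g hfc hcg hfg fun i => ?_
  have := hterm i (Finset.mem_univ i)
  rw [coords_ptX, coords_ptX, coords_ptX] at this
  unfold pd at this
  simp only at this
  omega

/-! ### Main theorem -/

/-- The difference in the inequality `gp(G □ H) ≥ gp(G) + gp(H) − 2` can be
arbitrarily large: for every integer `M` there are finite connected graphs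
`G` and `H` with `gp(G □ H) − (gp(G) + gp(H) − 2) ≥ M`. -/
theorem gp_boxProd_gap_arbitrarily_large (M : ℤ) :
    ∃ (V W : Type) (G : SimpleGraph V) (H : SimpleGraph W),
      Finite V ∧ Finite W ∧ G.Connected ∧ H.Connected ∧
      M ≤ (gpNum (G.boxProd H) : ℤ) - ((gpNum G : ℤ) + (gpNum H : ℤ) - 2) := by
  obtain ⟨m, hm⟩ : ∃ m : ℕ, M ≤ (m : ℤ) := ⟨M.toNat, Int.self_le_toNat M⟩
  set k := 2^(2^(m+1)) with hkdef
  have hk : 0 < k := Nat.pow_pos (by norm_num)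
  refine ⟨Vt k m, Fin k, Gg k m, pathG k, Finite.of_fintype _, Finite.of_fintype _,
    Gg_connected k hk m, pathG_connected hk, ?_⟩
  have hP : (2^(2^(m+1)) : ℕ) ≤ gpNum ((Gg k m).boxProd (pathG k)) := by
    have h2 := le_gpNum_of (Gg k (m+1)) _ (lower_gp m)
    have hcard : (Finset.image (ptX m) Finset.univ).card = 2^(2^(m+1)) := by
      rw [Finset.card_image_of_injective _ (ptX_inj m), Finset.card_univ]
      simp [Fintype.card_fun]
    rw [hcard] at h2
    exact h2
  have hG : gpNum (Gg k m) ≤ 2^(2^m) :=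
    gpNum_le_of _ _ (fun S hS => gg_upper k m hk S hS)
  have hH : gpNum (pathG k) ≤ 2 := by
    have h2 := gpNum_le_of (Gg k 0) 2 (fun S hS => by
      have := gg_upper k 0 hk S hS
      simpa using this)
    exact h2
  set A := 2^(2^m) with hAdef
  have hsq : (2:ℕ)^(2^(m+1)) = A * A := by
    have h1 : 2^(m+1) = 2^m + 2^m := by rw [pow_succ]; ring
    rw [hAdef, h1, pow_add]
  have hA2 : 2 ≤ A := by
    rw [hAdef]
    calc (2:ℕ) = 2^1 := by norm_num
    _ ≤ 2^(2^m) := Nat.pow_le_pow_right (by norm_num) (Nat.one_le_two_pow)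
  have hmA : m < A := by
    calc m < 2^m := Nat.lt_two_pow_self
    _ ≤ 2^(2^m) := Nat.pow_le_pow_right (by norm_num) (Nat.lt_two_pow_self).le
  have hkey : m + A ≤ A * A := by
    have h2A : 2 * A ≤ A * A := Nat.mul_le_mul_right A hA2
    omega
  have hPZ : (A * A : ℤ) ≤ (gpNum ((Gg k m).boxProd (pathG k)) : ℤ) := by
    exact_mod_cast hsq ▸ hP
  have hGZ : (gpNum (Gg k m) : ℤ) ≤ (A : ℤ) := by exact_mod_cast hG
  have hHZ : (gpNum (pathG k) : ℤ) ≤ 2 := by exact_mod_cast hH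
  have hkeyZ : (m : ℤ) + A ≤ (A : ℤ) * A := by exact_mod_cast hkey
  linarith
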